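/- Let k ∈ ℝ and let u : (0, ∞) → ℝ be a twice continuously differentiable function with u(x) > 0 for all x > 0 that satisfies x²·u(x)·u''(x) − ( x·u'(x) − u(x)/2 )² = (k/4)·u(x)² for all x > 0. Then there exist real constants c₁ and c₂ > 0 such that u(x) = c₂ · x^{c₁} · exp( ((k + 1)/8) · (log x)² ) for all x > 0. -/

import Mathlib

noncomputable section

lemma const_on_Ioi {f : ℝ → ℝ}
    (h : ∀ x ∈ Set.Ioi (0:ℝ), HasDerivAt f 0 x) :
    ∀ x ∈ Set.Ioi (0:ℝ), f x = f 1 := by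
  intro x hx
  refine (convex_Ioi (0:ℝ)).is_const_of_fderivWithin_eq_zero
    (fun y hy => (h y hy).differentiableAt.differentiableWithinAt)
    (fun y hy => ?_) hx (by norm_num)
  rw [fderivWithin_eq_fderiv (isOpen_Ioi.uniqueDiffOn y hy) (h y hy).differentiableAt,
    (h y hy).hasFDerivAt.fderiv]
  ext z
  simp

theorem stmt_13 (k : ℝ) (u : ℝ → ℝ)
    (hreg : ContDiffOn ℝ 2 u (Set.Ioi 0))
    (hpos : ∀ x : ℝ, 0 < x → 0 < u x)
    (hode : ∀ x : ℝ, 0 < x →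
      x ^ 2 * u x * deriv (deriv u) x - (x * deriv u x - u x / 2) ^ 2
        = (k / 4) * (u x) ^ 2) :
    ∃ c₁ c₂ : ℝ, 0 < c₂ ∧
      ∀ x : ℝ, 0 < x →
        u x = c₂ * x ^ c₁ * Real.exp ((k + 1) / 8 * (Real.log x) ^ 2) := by
  have hu1 : ∀ x ∈ Set.Ioi (0:ℝ), HasDerivAt u (deriv u x) x := by
    intro x hx
    exact (((hreg.differentiableOn (by norm_num)).differentiableAt
      (isOpen_Ioi.mem_nhds hx))).hasDerivAt
  have hu2 : ∀ x ∈ Set.Ioi (0:ℝ), HasDerivAt (deriv u) (deriv (deriv u) x) x := by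
    intro x hx
    have h1 : ContDiffOn ℝ 1 (deriv u) (Set.Ioi 0) :=
      hreg.deriv_of_isOpen isOpen_Ioi (by norm_num)
    exact ((h1.differentiableOn (by norm_num)).differentiableAt
      (isOpen_Ioi.mem_nhds hx)).hasDerivAt
  -- step 1: g x = x * deriv u x / u x - (k+1)/4 * log x is constant
  set g : ℝ → ℝ := fun x => x * deriv u x / u x - (k + 1) / 4 * Real.log x with hg
  have hgconst : ∀ x ∈ Set.Ioi (0:ℝ), g x = g 1 := by
    apply const_on_Ioi
    intro x hx
    have hx0 : (0:ℝ) < x := hx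
    have hux : u x ≠ 0 := (hpos x hx0).ne'
    have hd1 := ((hasDerivAt_id x).mul (hu2 x hx)).div (hu1 x hx) hux
    simp only [id_eq, one_mul, Pi.mul_apply] at hd1
    have hd2 : HasDerivAt (fun x => (k + 1) / 4 * Real.log x) ((k + 1) / 4 * x⁻¹) x :=
      (Real.hasDerivAt_log hx0.ne').const_mul _
    refine ((hd1.sub hd2).congr_deriv ?_).congr_of_eventuallyEq (Filter.Eventually.of_forall fun y => rfl)
    symm
    have hode' := hode x hx0
    field_simp
    linear_combination (-4 : ℝ) * hode'
  -- step 2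
  set c₁ : ℝ := g 1 with hc1
  set F : ℝ → ℝ := fun x => Real.log (u x) - (k + 1) / 8 * (Real.log x) ^ 2 - c₁ * Real.log x
    with hF
  have hFconst : ∀ x ∈ Set.Ioi (0:ℝ), F x = F 1 := by
    apply const_on_Ioi
    intro x hx
    have hx0 : (0:ℝ) < x := hx
    have hux : u x ≠ 0 := (hpos x hx0).ne'
    have hd1 : HasDerivAt (fun x => Real.log (u x)) (deriv u x / u x) x :=
      (hu1 x hx).log hux
    have hd2 : HasDerivAt (fun x => (k + 1) / 8 * (Real.log x) ^ 2)
        ((k + 1) / 8 * (2 * Real.log x ^ 1 * x⁻¹)) x :=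
      ((Real.hasDerivAt_log hx0.ne').pow 2).const_mul _
    have hd3 : HasDerivAt (fun x => c₁ * Real.log x) (c₁ * x⁻¹) x :=
      (Real.hasDerivAt_log hx0.ne').const_mul _
    refine (((hd1.sub hd2).sub hd3).congr_deriv ?_).congr_of_eventuallyEq (Filter.Eventually.of_forall fun y => rfl)
    symm
    have hgx := hgconst x hx
    rw [hg] at hgx
    simp only at hgx
    have : x * deriv u x / u x = (k + 1) / 4 * Real.log x + c₁ := by
      linarith [hgx]
    field_simp at this ⊢
    nlinarith [this]
  refine ⟨c₁, Real.exp (F 1), Real.exp_pos _, fun x hx => ?_⟩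
  have hx0 : (0:ℝ) < x := hx
  have h := hFconst x hx
  have : Real.log (u x) = F 1 + (k + 1) / 8 * (Real.log x) ^ 2 + c₁ * Real.log x := by
    rw [← h]; simp only [hF]; ring
  have := congrArg Real.exp this
  rw [Real.exp_log (hpos x hx0)] at this
  rw [this, Real.exp_add, Real.exp_add, Real.rpow_def_of_pos hx0]
  ring
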